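/- Let A_Y = diag_C(A, 0) be a selfadjoint diagonal twisted 1-form, i.e. A = diag_s(A_r, A_l) (trivial on ṡ) with, on each lepto-colour block I, A_r = [[0, conj(𝗄^I)·H_r†],[H_r·𝗄^I, 0]] and A_l = [[0, conj(𝗄^I)·H_l†],[H_l·𝗄^I, 0]] for quaternionic matrices H_r, H_l. Then J·A_Y·J⁻¹ = diag_C(0, conj(A)), and hence the diagonal twisted fluctuation is D_{A_Y} := γ⁵⊗D_Y + A_Y + J·A_Y·J⁻¹ = diag_C(η⊗D₀ + A, η⊗D₀† + conj(A)); in particular D_{A_Y} is Hermitian. -/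

import Mathlib

open Matrix

noncomputable section

namespace TwistSM

/-! ### Dirac matrices -/

def pauli1 : Matrix (Fin 2) (Fin 2) ℂ := !![0, 1; 1, 0]
def pauli2 : Matrix (Fin 2) (Fin 2) ℂ := !![0, -Complex.I; Complex.I, 0]
def pauli3 : Matrix (Fin 2) (Fin 2) ℂ := !![1, 0; 0, -1]

/-- σ^μ = (I₂, −iσ₁, −iσ₂, −iσ₃) -/
def sigE : Fin 4 → Matrix (Fin 2) (Fin 2) ℂ :=
  ![1, (-Complex.I) • pauli1, (-Complex.I) • pauli2, (-Complex.I) • pauli3]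
/-- σ̃^μ = (I₂, iσ₁, iσ₂, iσ₃) -/
def sigTE : Fin 4 → Matrix (Fin 2) (Fin 2) ℂ :=
  ![1, Complex.I • pauli1, Complex.I • pauli2, Complex.I • pauli3]

/-- Diagonal 2×2 block matrix [[A,0],[0,B]] over a leading `Fin 2` index. -/
def dgB {m : Type} (A B : Matrix m m ℂ) : Matrix (Fin 2 × m) (Fin 2 × m) ℂ :=
  Matrix.of fun p q =>
    if p.1 = q.1 then (if p.1 = 0 then A p.2 q.2 else B p.2 q.2) else 0

/-- Off-diagonal 2×2 block matrix [[0,A],[B,0]] over a leading `Fin 2` index. -/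
def odB {m : Type} (A B : Matrix m m ℂ) : Matrix (Fin 2 × m) (Fin 2 × m) ℂ :=
  Matrix.of fun p q =>
    if p.1 = 0 then (if q.1 = 0 then 0 else A p.2 q.2)
    else (if q.1 = 0 then B p.2 q.2 else 0)

/-- Euclidean Dirac matrices γ^μ_E = [[0, σ^μ],[σ̃^μ, 0]], acting on the spinor
indices (s, ṡ). -/
def gammaE (μ : Fin 4) : Matrix (Fin 2 × Fin 2) (Fin 2 × Fin 2) ℂ := odB (sigE μ) (sigTE μ)

/-- Entrywise complex conjugation of a matrix. -/
def mconj {m n : Type} (A : Matrix m n ℂ) : Matrix m n ℂ := A.map (starRingEnd ℂ)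

/-- C = i γ⁰_E γ²_E (the matrix part of the charge conjugation 𝒥 = C ∘ cc). -/
def Kspin : Matrix (Fin 2 × Fin 2) (Fin 2 × Fin 2) ℂ := Complex.I • (gammaE 0 * gammaE 2)

/-! ### The twisted algebra and its representation on ℂ¹²⁸ -/

/-- Quaternionic 2×2 matrices: of the form [[α,β],[−conj β, conj α]]. -/
def IsQuat (q : Matrix (Fin 2) (Fin 2) ℂ) : Prop :=
  q 1 0 = -(starRingEnd ℂ) (q 0 1) ∧ q 1 1 = (starRingEnd ℂ) (q 0 0)

/-- An element (c, c', q, q', m, m') of the twisted algebra. -/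
structure Alg : Type where
  c : ℂ
  c' : ℂ
  q : Matrix (Fin 2) (Fin 2) ℂ
  q' : Matrix (Fin 2) (Fin 2) ℂ
  m : Matrix (Fin 3) (Fin 3) ℂ
  m' : Matrix (Fin 3) (Fin 3) ℂ
  hq : IsQuat q
  hq' : IsQuat q'

/-- The twist ρ: exchange primed and unprimed entries. -/
def Alg.rho (a : Alg) : Alg := ⟨a.c', a.c, a.q', a.q, a.m', a.m, a.hq', a.hq⟩

/-- Flavour index α, as a pair (flavour pair, index within the pair):
(0,0) = 1̇, (0,1) = 2̇, (1,0) = 1, (1,1) = 2. -/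
abbrev Flav : Type := Fin 2 × Fin 2
/-- Internal index (I, α): lepto-colour I ∈ Fin 4 and flavour α. -/
abbrev Intl : Type := Fin 4 × Flav
/-- (ṡ, (I, α)) -/
abbrev HalfNoS : Type := Fin 2 × Intl
/-- Half of the full space: (s, ṡ, (I, α)). -/
abbrev Half : Type := Fin 2 × HalfNoS
/-- ℂ¹²⁸, indexed by (C, s, ṡ, (I, α)). -/
abbrev Full : Type := Fin 2 × Half

/-- diag(c, conj c) as a 2×2 matrix. -/
def cdiag (c : ℂ) : Matrix (Fin 2) (Fin 2) ℂ := Matrix.diagonal ![c, (starRingEnd ℂ) c]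

def pred3 (i : Fin 4) : Fin 3 := ⟨i.val - 1, by have := i.isLt; omega⟩

/-- diag(c, m) as a 4×4 matrix on the lepto-colour index. -/
def sm4 (c : ℂ) (m : Matrix (Fin 3) (Fin 3) ℂ) : Matrix (Fin 4) (Fin 4) ℂ :=
  Matrix.of fun i j =>
    if i = 0 then (if j = 0 then c else 0)
    else if j = 0 then 0 else m (pred3 i) (pred3 j)

/-- Q_r = diag(c, conj c, q') on the flavour index. -/
def Qr (a : Alg) : Matrix Flav Flav ℂ := dgB (cdiag a.c) a.q'
/-- Q_l = diag(c', conj c', q) on the flavour index. -/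
def Ql (a : Alg) : Matrix Flav Flav ℂ := dgB (cdiag a.c') a.q

/-- diag_α(A⊗I₂, B⊗I₂) on (I, α). -/
def msect (A B : Matrix (Fin 4) (Fin 4) ℂ) : Matrix Intl Intl ℂ :=
  Matrix.of fun p q =>
    if p.2 = q.2 then (if p.2.1 = 0 then A p.1 q.1 else B p.1 q.1) else 0

/-- M_r = diag_α(𝗆⊗I₂, 𝗆'⊗I₂). -/
def Mr (a : Alg) : Matrix Intl Intl ℂ := msect (sm4 a.c a.m) (sm4 a.c' a.m')
/-- M_l = diag_α(𝗆'⊗I₂, 𝗆⊗I₂). -/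
def Ml (a : Alg) : Matrix Intl Intl ℂ := msect (sm4 a.c' a.m') (sm4 a.c a.m)

/-- Lift a flavour matrix to (ṡ, (I, α)), acting trivially on ṡ and I. -/
def liftQ (X : Matrix Flav Flav ℂ) : Matrix HalfNoS HalfNoS ℂ :=
  Matrix.of fun p q => if p.1 = q.1 ∧ p.2.1 = q.2.1 then X p.2.2 q.2.2 else 0

/-- Lift a matrix on (I, α) to (ṡ, (I, α)), acting trivially on ṡ. -/
def liftI (X : Matrix Intl Intl ℂ) : Matrix HalfNoS HalfNoS ℂ :=
  Matrix.of fun p q => if p.1 = q.1 then X p.2 q.2 else 0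

/-- The Q-block of the representation: diag_s(Q_r, Q_l), trivial on ṡ and I. -/
def Qmat (a : Alg) : Matrix Half Half ℂ := dgB (liftQ (Qr a)) (liftQ (Ql a))
/-- The M-block of the representation: diag_s(M_r, M_l), trivial on ṡ. -/
def Mmat (a : Alg) : Matrix Half Half ℂ := dgB (liftI (Mr a)) (liftI (Ml a))

/-- The representation π(a) = diag_C(Q, M) of the twisted algebra on ℂ¹²⁸. -/
def rep (a : Alg) : Matrix Full Full ℂ := dgB (Qmat a) (Mmat a)

/-- Twisted commutator [T, π(b)]_ρ = T·π(b) − π(ρ(b))·T. -/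
def tcomm (T : Matrix Full Full ℂ) (b : Alg) : Matrix Full Full ℂ :=
  T * rep b - rep b.rho * T

/-- K = (i γ⁰_E γ²_E) ⊗ ξ ⊗ I₁₆ (with ξ on the internal index C);
the real structure is J = K ∘ cc. -/
def Kmat : Matrix Full Full ℂ :=
  Matrix.of fun p q =>
    (!![0, 1; 1, 0] : Matrix (Fin 2) (Fin 2) ℂ) p.1 q.1 *
      Kspin (p.2.1, p.2.2.1) (q.2.1, q.2.2.1) *
      (if p.2.2.2 = q.2.2.2 then 1 else 0)

/-- J T J⁻¹ = −K · conj(T) · conj(K) as a matrix operation. -/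
def Jconj (T : Matrix Full Full ℂ) : Matrix Full Full ℂ := -(Kmat * mconj T * mconj Kmat)

/-! ### Yukawa and Majorana parts of the Dirac operator -/

/-- 𝗄^I = diag(k_u^I, k_d^I). -/
def kdiag (kν ke ku kd : ℂ) (i : Fin 4) : Matrix (Fin 2) (Fin 2) ℂ :=
  if i = 0 then Matrix.diagonal ![kν, ke] else Matrix.diagonal ![ku, kd]

/-- Block-diagonal matrix on (I, α) from a family of flavour matrices. -/
def diagI (F : Fin 4 → Matrix Flav Flav ℂ) : Matrix Intl Intl ℂ :=
  Matrix.of fun p q => if p.1 = q.1 then F p.1 p.2 q.2 else 0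

/-- The Yukawa mass matrix D₀ = diag_I(D₀^I), D₀^I = [[0, conj 𝗄^I],[𝗄^I, 0]]. -/
def D0 (kν ke ku kd : ℂ) : Matrix Intl Intl ℂ :=
  diagI fun i => odB (mconj (kdiag kν ke ku kd i)) (kdiag kν ke ku kd i)

/-- η ⊗ X, with η = diag_s(1,−1) ⊗ I₂ on (s, ṡ) and X on (I, α). -/
def etaD (X : Matrix Intl Intl ℂ) : Matrix Half Half ℂ := dgB (liftI X) (liftI (-X))

/-- γ⁵ ⊗ D_Y = diag_C(η⊗D₀, η⊗D₀†). -/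
def g5DY (kν ke ku kd : ℂ) : Matrix Full Full ℂ :=
  dgB (etaD (D0 kν ke ku kd)) (etaD ((D0 kν ke ku kd)ᴴ))

/-- Ξ = diag(1,0,0,0)_I ⊗ diag(1,0,0,0)_α on (I, α). -/
def XiI : Matrix Intl Intl ℂ :=
  Matrix.of fun p q =>
    if p = q ∧ p.1 = 0 ∧ p.2 = ((0 : Fin 2), (0 : Fin 2)) then 1 else 0

/-- γ⁵ ⊗ D_M = [[0, η⊗D_R],[η⊗D_R†, 0]]_C with D_R = k_R Ξ. -/
def g5DM (kR : ℂ) : Matrix Full Full ℂ :=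
  odB (etaD (kR • XiI)) (etaD ((kR • XiI)ᴴ))

/-! ### The free 1-form -/

/-- Lift a spinor matrix (on (s, ṡ)) to ℂ¹²⁸, identity on C and (I, α). -/
def liftSpin (G : Matrix (Fin 2 × Fin 2) (Fin 2 × Fin 2) ℂ) : Matrix Full Full ℂ :=
  Matrix.of fun p q =>
    (if p.1 = q.1 ∧ p.2.2.2 = q.2.2.2 then 1 else 0) * G (p.2.1, p.2.2.1) (q.2.1, q.2.2.1)

/-- Q_μ = diag_s(Q^r_μ, Q^l_μ), Q^{r/l}_μ = diag(c^{r/l}, conj c^{r/l}, q^{r/l}),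
trivial on ṡ and I. -/
def freeQ (cr cl : ℂ) (qr ql : Matrix (Fin 2) (Fin 2) ℂ) : Matrix Half Half ℂ :=
  dgB (liftQ (dgB (cdiag cr) qr)) (liftQ (dgB (cdiag cl) ql))

/-- M_μ = diag_s(M^r_μ, M^l_μ), M^r_μ = diag_α(𝗆^r⊗I₂, 𝗆^l⊗I₂), 𝗆^{r/l} = diag(c^{r/l}, m^{r/l}),
trivial on ṡ. -/
def freeM (cr cl : ℂ) (mr ml : Matrix (Fin 3) (Fin 3) ℂ) : Matrix Half Half ℂ :=
  dgB (liftI (msect (sm4 cr mr) (sm4 cl ml))) (liftI (msect (sm4 cl ml) (sm4 cr mr)))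

/-- The free 1-form coefficient matrix A_μ = diag_C(Q_μ, M_μ). -/
def freeA (cr cl : ℂ) (qr ql : Matrix (Fin 2) (Fin 2) ℂ)
    (mr ml : Matrix (Fin 3) (Fin 3) ℂ) : Matrix Full Full ℂ :=
  dgB (freeQ cr cl qr ql) (freeM cr cl mr ml)

/-! ### Partial derivatives -/

/-- Partial derivative in the μ-th coordinate direction of ℝ⁴ (ℂ-valued). -/
def pdC (μ : Fin 4) (f : (Fin 4 → ℝ) → ℂ) (x : Fin 4 → ℝ) : ℂ :=
  fderiv ℝ f x (Pi.single μ 1)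

/-- Partial derivative in the μ-th coordinate direction of ℝ⁴ (ℝ-valued). -/
def pdR (μ : Fin 4) (f : (Fin 4 → ℝ) → ℝ) (x : Fin 4 → ℝ) : ℝ :=
  fderiv ℝ f x (Pi.single μ 1)

/-- Entrywise partial derivative of a matrix-valued function. -/
def pdM {m n : Type} (μ : Fin 4) (F : (Fin 4 → ℝ) → Matrix m n ℂ) (x : Fin 4 → ℝ) :
    Matrix m n ℂ :=
  Matrix.of fun i j => pdC μ (fun y => F y i j) x



/-! ### Auxiliary lemmas -/

section Aux

variable {m : Type} [Fintype m] [DecidableEq m]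

lemma dgB_add (A B C D : Matrix m m ℂ) : dgB A B + dgB C D = dgB (A + C) (B + D) := by
  ext ⟨i, p⟩ ⟨j, q⟩
  simp only [dgB, Matrix.add_apply, Matrix.of_apply]
  split_ifs <;> simp

lemma dgB_mul (A B C D : Matrix m m ℂ) : dgB A B * dgB C D = dgB (A * C) (B * D) := by
  ext ⟨i, p⟩ ⟨j, q⟩
  rw [Matrix.mul_apply, Fintype.sum_prod_type, Fin.sum_univ_two]
  fin_cases i <;> fin_cases j <;> simp [dgB, Matrix.mul_apply]

lemma odB_mul_dgB (A B C D : Matrix m m ℂ) : odB A B * dgB C D = odB (A * D) (B * C) := by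
  ext ⟨i, p⟩ ⟨j, q⟩
  rw [Matrix.mul_apply, Fintype.sum_prod_type, Fin.sum_univ_two]
  fin_cases i <;> fin_cases j <;> simp [dgB, odB, Matrix.mul_apply]

lemma odB_mul_odB (A B C D : Matrix m m ℂ) : odB A B * odB C D = dgB (A * D) (B * C) := by
  ext ⟨i, p⟩ ⟨j, q⟩
  rw [Matrix.mul_apply, Fintype.sum_prod_type, Fin.sum_univ_two]
  fin_cases i <;> fin_cases j <;> simp [dgB, odB, Matrix.mul_apply]

lemma neg_dgB (A B : Matrix m m ℂ) : -dgB A B = dgB (-A) (-B) := by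
  ext ⟨i, p⟩ ⟨j, q⟩
  simp only [dgB, Matrix.neg_apply, Matrix.of_apply]
  split_ifs <;> simp

lemma neg_odB (A B : Matrix m m ℂ) : -odB A B = odB (-A) (-B) := by
  ext ⟨i, p⟩ ⟨j, q⟩
  simp only [odB, Matrix.neg_apply, Matrix.of_apply]
  split_ifs <;> simp

lemma dgB_one : dgB (1 : Matrix m m ℂ) 1 = 1 := by
  ext ⟨i, p⟩ ⟨j, q⟩
  by_cases h1 : i = j <;> by_cases h2 : p = q <;>
    simp [dgB, Matrix.one_apply, h1, h2, Prod.ext_iff]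

lemma mconj_dgB (A B : Matrix m m ℂ) : mconj (dgB A B) = dgB (mconj A) (mconj B) := by
  ext ⟨i, p⟩ ⟨j, q⟩
  simp only [mconj, dgB, Matrix.map_apply, Matrix.of_apply]
  split_ifs <;> simp

lemma mconj_odB (A B : Matrix m m ℂ) : mconj (odB A B) = odB (mconj A) (mconj B) := by
  ext ⟨i, p⟩ ⟨j, q⟩
  simp only [mconj, odB, Matrix.map_apply, Matrix.of_apply]
  split_ifs <;> simp

lemma mconj_zero : mconj (0 : Matrix m m ℂ) = 0 := by
  ext i j; simp [mconj]

lemma mconj_neg {A : Matrix m m ℂ} : mconj (-A) = -(mconj A) := by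
  ext i j; simp [mconj]

lemma dgB_ct (A B : Matrix m m ℂ) : (dgB A B)ᴴ = dgB Aᴴ Bᴴ := by
  ext ⟨i, p⟩ ⟨j, q⟩
  fin_cases i <;> fin_cases j <;>
    simp [dgB, Matrix.conjTranspose_apply]

lemma odB_ct (A B : Matrix m m ℂ) : (odB A B)ᴴ = odB Bᴴ Aᴴ := by
  ext ⟨i, p⟩ ⟨j, q⟩
  fin_cases i <;> fin_cases j <;>
    simp [odB, Matrix.conjTranspose_apply]

end Aux

/-- g on ṡ, trivial on (I, α). -/
def liftS (g : Matrix (Fin 2) (Fin 2) ℂ) : Matrix HalfNoS HalfNoS ℂ :=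
  Matrix.of fun p q => if p.2 = q.2 then g p.1 q.1 else 0

lemma liftS_neg (g : Matrix (Fin 2) (Fin 2) ℂ) : liftS (-g) = -liftS g := by
  ext ⟨a, p⟩ ⟨b, q⟩
  simp only [liftS, Matrix.neg_apply, Matrix.of_apply]
  split_ifs <;> simp

lemma liftS_one : liftS 1 = (1 : Matrix HalfNoS HalfNoS ℂ) := by
  ext ⟨a, p⟩ ⟨b, q⟩
  by_cases h1 : a = b <;> by_cases h2 : p = q <;>
    simp_all [liftS, Matrix.one_apply, Prod.ext_iff]

lemma mconj_liftS (g : Matrix (Fin 2) (Fin 2) ℂ) : mconj (liftS g) = liftS (mconj g) := by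
  ext ⟨a, p⟩ ⟨b, q⟩
  simp only [mconj, liftS, Matrix.map_apply, Matrix.of_apply]
  split_ifs <;> simp

lemma mconj_liftI (X : Matrix Intl Intl ℂ) : mconj (liftI X) = liftI (mconj X) := by
  ext ⟨a, p⟩ ⟨b, q⟩
  simp only [mconj, liftI, Matrix.map_apply, Matrix.of_apply]
  split_ifs <;> simp

lemma liftI_ct (X : Matrix Intl Intl ℂ) : (liftI X)ᴴ = liftI Xᴴ := by
  ext ⟨a, p⟩ ⟨b, q⟩
  rcases eq_or_ne a b with h | h
  · subst h; simp [liftI, Matrix.conjTranspose_apply]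
  · simp [liftI, Matrix.conjTranspose_apply, h, h.symm]

lemma liftS_mul (g h : Matrix (Fin 2) (Fin 2) ℂ) : liftS g * liftS h = liftS (g * h) := by
  ext ⟨a, p⟩ ⟨b, q⟩
  rw [Matrix.mul_apply, Fintype.sum_prod_type]
  simp [liftS, Matrix.mul_apply, Finset.sum_ite_eq, Finset.sum_ite_eq', ite_mul, mul_ite,
    Finset.mul_sum, Finset.sum_comm (γ := Intl)]

lemma liftS_mul_liftI (g : Matrix (Fin 2) (Fin 2) ℂ) (X : Matrix Intl Intl ℂ) :
    liftS g * liftI X = Matrix.of fun p q => g p.1 q.1 * X p.2 q.2 := by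
  ext ⟨a, p⟩ ⟨b, q⟩
  rw [Matrix.mul_apply, Fintype.sum_prod_type]
  simp [liftS, liftI, Finset.sum_ite_eq, Finset.sum_ite_eq', ite_mul, mul_ite]

lemma liftI_mul_liftS (g : Matrix (Fin 2) (Fin 2) ℂ) (X : Matrix Intl Intl ℂ) :
    liftI X * liftS g = Matrix.of fun p q => g p.1 q.1 * X p.2 q.2 := by
  ext ⟨a, p⟩ ⟨b, q⟩
  rw [Matrix.mul_apply, Fintype.sum_prod_type]
  simp [liftS, liftI, Finset.sum_ite_eq, Finset.sum_ite_eq', ite_mul, mul_ite, mul_comm]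

/-- The spinorial part of K, as a matrix on `Half`. -/
def KsH : Matrix Half Half ℂ := dgB (liftS (-pauli2)) (liftS pauli2)

lemma pauli2_mul : pauli2 * pauli2 = 1 := by
  ext i j
  fin_cases i <;> fin_cases j <;>
    simp [pauli2, Matrix.mul_apply, Fin.sum_univ_two, Matrix.one_apply, Complex.I_mul_I]

lemma mconj_pauli2 : mconj pauli2 = -pauli2 := by
  ext i j
  fin_cases i <;> fin_cases j <;> simp [mconj, pauli2]

lemma Kspin_eq : Kspin = dgB (-pauli2) pauli2 := by
  ext ⟨s, t⟩ ⟨s', t'⟩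
  fin_cases s <;> fin_cases s' <;> fin_cases t <;> fin_cases t' <;>
    simp [Kspin, gammaE, odB, sigE, sigTE, pauli1, pauli2, pauli3, dgB,
      Matrix.mul_apply, Fintype.sum_prod_type, Fin.sum_univ_two, Matrix.one_apply]

lemma Kmat_eq : Kmat = odB KsH KsH := by
  ext ⟨c, s, t, i⟩ ⟨c', s', t', i'⟩
  fin_cases c <;> fin_cases c' <;> fin_cases s <;> fin_cases s' <;>
    simp [Kmat, Kspin_eq, KsH, odB, dgB, liftS, mul_comm] <;> split_ifs <;> simp

lemma KsH_mul_KsH : KsH * KsH = 1 := by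
  rw [KsH, dgB_mul, liftS_mul, liftS_mul, neg_mul_neg, pauli2_mul, liftS_one, dgB_one]

lemma mconj_KsH : mconj KsH = -KsH := by
  rw [KsH, mconj_dgB, mconj_liftS, mconj_liftS, mconj_neg, mconj_pauli2, neg_neg,
    neg_dgB, ← liftS_neg, ← liftS_neg, neg_neg]

lemma mconj_Kmat : mconj Kmat = -Kmat := by
  rw [Kmat_eq, mconj_odB, mconj_KsH, neg_odB]

lemma KsH_comm (X Y : Matrix Intl Intl ℂ) :
    KsH * dgB (liftI X) (liftI Y) = dgB (liftI X) (liftI Y) * KsH := by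
  rw [KsH, dgB_mul, dgB_mul, liftS_mul_liftI, liftS_mul_liftI, liftI_mul_liftS, liftI_mul_liftS]

lemma Jconj_dgB0 (X Y : Matrix Intl Intl ℂ) :
    Jconj (dgB (dgB (liftI X) (liftI Y)) 0) = dgB 0 (mconj (dgB (liftI X) (liftI Y))) := by
  have hMc : mconj (dgB (liftI X) (liftI Y)) = dgB (liftI (mconj X)) (liftI (mconj Y)) := by
    rw [mconj_dgB, mconj_liftI, mconj_liftI]
  rw [Jconj, mconj_Kmat, Kmat_eq, mconj_dgB, mconj_zero, odB_mul_dgB, mul_zero,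
    mul_neg, odB_mul_odB, zero_mul, neg_neg, hMc, mul_assoc, ← mul_assoc, KsH_comm,
    mul_assoc, KsH_mul_KsH, mul_one]

lemma diagI_ct (F : Fin 4 → Matrix Flav Flav ℂ) :
    (diagI F)ᴴ = diagI fun i => (F i)ᴴ := by
  ext ⟨a, p⟩ ⟨b, q⟩
  rcases eq_or_ne a b with h | h
  · subst h; simp [diagI, Matrix.conjTranspose_apply]
  · simp [diagI, Matrix.conjTranspose_apply, h, h.symm]

lemma kdiag_ct (kν ke ku kd : ℂ) (i : Fin 4) :
    (kdiag kν ke ku kd i)ᴴ = mconj (kdiag kν ke ku kd i) := by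
  unfold kdiag mconj
  split_ifs <;> ext a b <;> fin_cases a <;> fin_cases b <;>
    simp [Matrix.diagonal, Matrix.conjTranspose_apply]

lemma mconj_kdiag_ct (kν ke ku kd : ℂ) (i : Fin 4) :
    (mconj (kdiag kν ke ku kd i))ᴴ = kdiag kν ke ku kd i := by
  unfold kdiag mconj
  split_ifs <;> ext a b <;> fin_cases a <;> fin_cases b <;>
    simp [Matrix.diagonal, Matrix.conjTranspose_apply]

lemma D0_ct (kν ke ku kd : ℂ) : (D0 kν ke ku kd)ᴴ = D0 kν ke ku kd := by
  rw [D0, diagI_ct]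
  have h : ∀ i, (odB (mconj (kdiag kν ke ku kd i)) (kdiag kν ke ku kd i))ᴴ
      = odB (mconj (kdiag kν ke ku kd i)) (kdiag kν ke ku kd i) := fun i => by
    rw [odB_ct, kdiag_ct, mconj_kdiag_ct]
  simp only [h]

lemma etaD_ct (X : Matrix Intl Intl ℂ) : (etaD X)ᴴ = etaD Xᴴ := by
  rw [etaD, dgB_ct, liftI_ct, liftI_ct, Matrix.conjTranspose_neg, etaD]

lemma mconj_ct_of_herm {A : Matrix Half Half ℂ} (h : Aᴴ = A) : (mconj A)ᴴ = mconj A := by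
  ext i j
  have := congrFun (congrFun h j) i
  rw [Matrix.conjTranspose_apply] at this
  simp [mconj, Matrix.conjTranspose_apply, Matrix.map_apply, ← this]

lemma dgB_herm {A B : Matrix Half Half ℂ} (hA : Aᴴ = A) (hB : Bᴴ = B) :
    (dgB A B).IsHermitian := by
  rw [Matrix.IsHermitian, dgB_ct, hA, hB]

/-- for a selfadjoint diagonal twisted 1-form A_Y parametrized by quaternionic
H_r, H_l, one has J·A_Y·J⁻¹ = diag_C(0, conj A), hence the diagonal twisted fluctuation is
D_{A_Y} = diag_C(η⊗D₀ + A, η⊗D₀† + conj A); in particular D_{A_Y} is Hermitian. -/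
theorem statement7 (kν ke ku kd : ℂ) (Hr Hl : Matrix (Fin 2) (Fin 2) ℂ)
    (hr : IsQuat Hr) (hl : IsQuat Hl) :
    let Ad : Matrix Half Half ℂ := dgB
        (liftI (diagI fun I =>
          odB (mconj (kdiag kν ke ku kd I) * Hrᴴ) (Hr * kdiag kν ke ku kd I)))
        (liftI (diagI fun I =>
          odB (mconj (kdiag kν ke ku kd I) * Hlᴴ) (Hl * kdiag kν ke ku kd I)))
    let AY : Matrix Full Full ℂ := dgB Ad (0 : Matrix Half Half ℂ)
    Jconj AY = dgB (0 : Matrix Half Half ℂ) (mconj Ad) ∧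
    g5DY kν ke ku kd + AY + Jconj AY
      = dgB (etaD (D0 kν ke ku kd) + Ad) (etaD ((D0 kν ke ku kd)ᴴ) + mconj Ad) ∧
    (g5DY kν ke ku kd + AY + Jconj AY).IsHermitian := by
  intro Ad AY
  have hblk : ∀ (H : Matrix (Fin 2) (Fin 2) ℂ) i,
      (odB (mconj (kdiag kν ke ku kd i) * Hᴴ) (H * kdiag kν ke ku kd i))ᴴ
        = odB (mconj (kdiag kν ke ku kd i) * Hᴴ) (H * kdiag kν ke ku kd i) := by
    intro H i
    rw [odB_ct, Matrix.conjTranspose_mul, Matrix.conjTranspose_mul,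
      Matrix.conjTranspose_conjTranspose, kdiag_ct, mconj_kdiag_ct]
  have hAdherm : Adᴴ = Ad := by
    show (dgB _ _)ᴴ = _
    rw [dgB_ct, liftI_ct, liftI_ct, diagI_ct, diagI_ct]
    simp only [hblk]
    rfl
  have hJ : Jconj AY = dgB 0 (mconj Ad) :=
    Jconj_dgB0
      (diagI fun I =>
        odB (mconj (kdiag kν ke ku kd I) * Hrᴴ) (Hr * kdiag kν ke ku kd I))
      (diagI fun I =>
        odB (mconj (kdiag kν ke ku kd I) * Hlᴴ) (Hl * kdiag kν ke ku kd I))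
  have h2 : g5DY kν ke ku kd + AY + Jconj AY
      = dgB (etaD (D0 kν ke ku kd) + Ad) (etaD ((D0 kν ke ku kd)ᴴ) + mconj Ad) := by
    rw [hJ]
    show dgB (etaD (D0 kν ke ku kd)) (etaD ((D0 kν ke ku kd)ᴴ)) + dgB Ad 0
        + dgB 0 (mconj Ad) = _
    rw [dgB_add, dgB_add, add_zero, add_zero]
  refine ⟨hJ, h2, ?_⟩
  rw [h2]
  refine dgB_herm ?_ ?_
  · rw [Matrix.conjTranspose_add, etaD_ct, D0_ct, hAdherm]
  · rw [Matrix.conjTranspose_add, etaD_ct, Matrix.conjTranspose_conjTranspose, D0_ct,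
      mconj_ct_of_herm hAdherm]


end TwistSM
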